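/- Let 1 ≤ p_1 ≤ ... ≤ p_d ≤ n. Then the following sandwich holds: d(p_1−1)(n−p_1+1)^{d−1} ≤ n^d − q_n(p_1,...,p_d) ≤ Σ_{i=1}^d C(d,i)(p_i−1)^i (n−p_i+1)^{d−i}. -/

import Mathlib

open Finset

/-- The `i`-th smallest entry (with multiplicity) of the tuple `x`. -/
def sortedNth {d : ℕ} (x : Fin d → ℕ) (i : Fin d) : ℕ :=
  x (Tuple.sort x i)

/-- The `d`-tuples with entries in `[n] = {1,…,n}`. -/
def tuples (n d : ℕ) : Finset (Fin d → ℕ) :=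
  Fintype.piFinset fun _ => Finset.Icc 1 n

/-- `q_n(p_1,…,p_d)`: the number of `x ∈ [n]^d` whose `i`-th smallest
entry is at least `p_i` for every `i`. -/
def qn (n d : ℕ) (p : Fin d → ℕ) : ℕ :=
  ((tuples n d).filter fun x => ∀ i, p i ≤ sortedNth x i).card

lemma sorted_lt_iff {d : ℕ} (x : Fin d → ℕ) {t : ℕ} (ht : 1 ≤ t) (i : Fin d) :
    sortedNth x i < t ↔ (i : ℕ) < #(univ.filter fun j => x j < t) := by
  have key := Tuple.lt_card_le_iff_apply_le_of_monotone (f := x ∘ Tuple.sort x) (a := t - 1)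
    (Tuple.monotone_sort x) (j := i)
  rw [← Fintype.card_subtype] at key
  have hcong : Fintype.card {j // (x ∘ Tuple.sort x) j ≤ t - 1} =
      Fintype.card {j // x j < t} := by
    refine Fintype.card_congr (Equiv.subtypeEquiv (Tuple.sort x) fun j => ?_)
    simp only [Function.comp_apply]
    omega
  rw [hcong] at key
  have : #(univ.filter fun j => x j < t) = Fintype.card {j // x j < t} := by
    rw [Fintype.card_subtype]
  rw [this, ← key.symm]
  simp only [Function.comp_apply, sortedNth]
  omega

lemma card_B (n d t k : ℕ) (ht1 : 1 ≤ t) (htn : t ≤ n) :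
    #((tuples n d).filter fun x => #(univ.filter fun j => x j < t) = k)
      = d.choose k * (t - 1) ^ k * (n - t + 1) ^ (d - k) := by
  classical
  have hset : ((tuples n d).filter fun x => #(univ.filter fun j => x j < t) = k)
      = (univ.powersetCard k).biUnion
        (fun s => Fintype.piFinset fun j => if j ∈ s then Icc 1 (t-1) else Icc t n) := by
    ext x
    simp only [mem_filter, tuples, Fintype.mem_piFinset, mem_biUnion, mem_powersetCard,
      mem_Icc, subset_univ, true_and]
    constructor
    · rintro ⟨hx, hc⟩
      refine ⟨univ.filter fun j => x j < t, hc, fun j => ?_⟩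
      have := hx j
      by_cases hj : x j < t <;> simp [hj, mem_filter, mem_Icc] <;> omega
    · rintro ⟨s, hs, hmem⟩
      have heq : (univ.filter fun j => x j < t) = s := by
        ext j
        have := hmem j
        by_cases hj : j ∈ s <;> simp [hj, mem_filter] at this ⊢ <;> omega
      constructor
      · intro j
        have := hmem j
        by_cases hj : j ∈ s <;> simp [hj] at this <;> omega
      · rw [heq]; exact hs
  rw [hset, card_biUnion]
  · have hcard : ∀ s ∈ (univ : Finset (Fin d)).powersetCard k,
        #(Fintype.piFinset fun j : Fin d => if j ∈ s then Icc 1 (t-1) else Icc t n)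
          = (t - 1) ^ k * (n - t + 1) ^ (d - k) := by
      intro s hs
      rw [mem_powersetCard] at hs
      rw [Fintype.card_piFinset]
      have : ∀ j : Fin d, #(if j ∈ s then Icc 1 (t-1) else Icc t n)
          = if j ∈ s then t - 1 else n - t + 1 := by
        intro j; by_cases hj : j ∈ s <;> simp [hj, Nat.card_Icc] <;> omega
      simp_rw [this]
      rw [Finset.prod_ite, Finset.prod_const, Finset.prod_const,
        Finset.filter_mem_eq_inter, Finset.univ_inter, hs.2]
      congr 1
      rw [Finset.filter_not, Finset.filter_mem_eq_inter, Finset.univ_inter,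
        Finset.card_sdiff_of_subset (subset_univ s), card_univ, Fintype.card_fin, hs.2]
    rw [Finset.sum_congr rfl hcard, Finset.sum_const, Finset.card_powersetCard,
      card_univ, Fintype.card_fin, smul_eq_mul, mul_assoc]
  · intro s hs s' hs' hne
    simp only [Finset.disjoint_left]
    intro x hx hx'
    apply hne
    rw [Fintype.mem_piFinset] at hx hx'
    have h1 : ∀ j, j ∈ s ↔ x j < t := by
      intro j; have := hx j
      by_cases hj : j ∈ s <;> simp [hj, mem_Icc] at this ⊢ <;> omega
    have h2 : ∀ j, j ∈ s' ↔ x j < t := by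
      intro j; have := hx' j
      by_cases hj : j ∈ s' <;> simp [hj, mem_Icc] at this ⊢ <;> omega
    ext j; rw [h1, h2]

/-- For `1 ≤ p_1 ≤ … ≤ p_d ≤ n`:
`d(p_1−1)(n−p_1+1)^{d−1} ≤ n^d − q_n(p_1,…,p_d) ≤
Σ_{i=1}^d C(d,i)(p_i−1)^i (n−p_i+1)^{d−i}`. -/
theorem sandwich (n d : ℕ) (hd : 0 < d) (p : Fin d → ℕ) (hmono : Monotone p)
    (hp1 : ∀ i, 1 ≤ p i) (hpn : ∀ i, p i ≤ n) :
    d * (p ⟨0, hd⟩ - 1) * (n - p ⟨0, hd⟩ + 1) ^ (d - 1) ≤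
      n ^ d - qn n d p ∧
    n ^ d - qn n d p ≤
      ∑ i : Fin d, d.choose (i.val + 1) * (p i - 1) ^ (i.val + 1) *
        (n - p i + 1) ^ (d - (i.val + 1)) := by
  classical
  set S := (tuples n d).filter fun x => ¬ ∀ i, p i ≤ sortedNth x i with hS
  have hcardT : #(tuples n d) = n ^ d := by
    rw [tuples, Fintype.card_piFinset]
    simp [Nat.card_Icc]
  have hSq : n ^ d - qn n d p = #S := by
    have key : qn n d p + #S = n ^ d := by
      rw [hS]
      unfold qn
      rw [← hcardT]
      exact Finset.card_filter_add_card_filter_not _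
    omega
  -- membership in S via counts
  have hmemS : ∀ x, x ∈ S ↔ x ∈ tuples n d ∧
      ∃ i : Fin d, (i : ℕ) < #(univ.filter fun j => x j < p i) := by
    intro x
    rw [hS, mem_filter]
    constructor
    · rintro ⟨hx, hni⟩
      push_neg at hni
      obtain ⟨i, hi⟩ := hni
      exact ⟨hx, i, (sorted_lt_iff x (hp1 i) i).1 (by omega)⟩
    · rintro ⟨hx, i, hi⟩
      refine ⟨hx, ?_⟩
      push_neg
      exact ⟨i, by have := (sorted_lt_iff x (hp1 i) i).2 hi; omega⟩
  constructor
  · -- lower bound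
    rw [hSq]
    have hsub : ((tuples n d).filter fun x =>
        #(univ.filter fun j => x j < p ⟨0, hd⟩) = 1) ⊆ S := by
      intro x hx
      rw [mem_filter] at hx
      rw [hmemS]
      exact ⟨hx.1, ⟨0, hd⟩, by rw [hx.2]; simp⟩
    calc d * (p ⟨0, hd⟩ - 1) * (n - p ⟨0, hd⟩ + 1) ^ (d - 1)
        = #((tuples n d).filter fun x =>
            #(univ.filter fun j => x j < p ⟨0, hd⟩) = 1) := by
          rw [card_B n d _ 1 (hp1 _) (hpn _), Nat.choose_one_right, pow_one]
      _ ≤ #S := Finset.card_le_card hsub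
  · -- upper bound
    rw [hSq]
    have hsub : S ⊆ univ.biUnion (fun i : Fin d => (tuples n d).filter fun x =>
        #(univ.filter fun j => x j < p i) = i.val + 1) := by
      intro x hx
      rw [hmemS] at hx
      obtain ⟨hxt, i, hi⟩ := hx
      rw [mem_biUnion]
      -- the set of indices where count exceeds
      set T := univ.filter fun i : Fin d => (i : ℕ) + 1 ≤ #(univ.filter fun j => x j < p i)
        with hT
      have hTne : T.Nonempty := ⟨i, by rw [hT, mem_filter]; exact ⟨mem_univ _, by omega⟩⟩
      obtain ⟨k, hkT, hkmax⟩ := T.exists_max_image (fun i => (i : ℕ)) hTne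
      rw [hT, mem_filter] at hkT
      have hck : (k : ℕ) + 1 ≤ #(univ.filter fun j => x j < p k) := hkT.2
      have hcle : #(univ.filter fun j => x j < p k) ≤ d := by
        calc #(univ.filter fun j => x j < p k) ≤ #(univ : Finset (Fin d)) :=
          Finset.card_filter_le _ _
        _ = d := by simp
      set m : ℕ := #(univ.filter fun j => x j < p k) - 1 with hm
      have hmk : (k : ℕ) ≤ m := by omega
      have hmd : m < d := by omega
      have hmono' : (univ.filter fun j => x j < p k) ⊆
          (univ.filter fun j => x j < p ⟨m, hmd⟩) := by
        apply Finset.monotone_filter_right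
        intro j _ hj
        exact lt_of_lt_of_le hj (hmono (by exact_mod_cast hmk : k ≤ ⟨m, hmd⟩))
      have hcm : m + 1 ≤ #(univ.filter fun j => x j < p ⟨m, hmd⟩) := by
        have := Finset.card_le_card hmono'
        omega
      have hmem' : (⟨m, hmd⟩ : Fin d) ∈ T := by
        rw [hT, mem_filter]; exact ⟨mem_univ _, hcm⟩
      have hmle : m ≤ (k : ℕ) := hkmax _ hmem'
      have hmeq : m = (k : ℕ) := le_antisymm hmle hmk
      refine ⟨k, mem_univ _, ?_⟩
      rw [mem_filter]
      exact ⟨hxt, by omega⟩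
    calc #S ≤ ∑ i : Fin d, #((tuples n d).filter fun x =>
          #(univ.filter fun j => x j < p i) = i.val + 1) :=
        le_trans (Finset.card_le_card hsub) (Finset.card_biUnion_le)
      _ = ∑ i : Fin d, d.choose (i.val + 1) * (p i - 1) ^ (i.val + 1) *
          (n - p i + 1) ^ (d - (i.val + 1)) := by
        refine Finset.sum_congr rfl fun i _ => ?_
        exact card_B n d (p i) (i.val + 1) (hp1 i) (hpn i)
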